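/- Let x, y, z, t be points in ℝ² such that the closed segments [x, y] and [z, t] intersect in exactly one point O, and O is not one of the endpoints x, y, z, t. Let Q be a finite set of nondegenerate closed segments in ℝ² such that any two distinct members of Q intersect either in the empty set or in a common endpoint, and such that ⋃Q = [x, y] ∪ [z, t]. Then O is an endpoint of some segment of Q. (This is the claim in the Remark after Conjecture 3.3: for any simplicial 1-chain C' whose union equals the union of the two crossing diameters, the crossing point O is a vertex of C'.) -/

import Mathlib

/-- `s ⊆ ℝⁿ` is the geometric `c`-simplex with vertex set `V`:
`V` consists of `c + 1` affinely independent points and `s` is their convex hull. -/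
def IsSimplexWithVertices {n : ℕ} (c : ℕ) (V : Finset (Fin n → ℝ))
    (s : Set (Fin n → ℝ)) : Prop :=
  V.card = c + 1 ∧
  AffineIndependent ℝ ((↑) : V → (Fin n → ℝ)) ∧
  s = convexHull ℝ (V : Set (Fin n → ℝ))

/-- `s` is a `c`-simplex in `ℝⁿ`. -/
def IsSimplex {n : ℕ} (c : ℕ) (s : Set (Fin n → ℝ)) : Prop :=
  ∃ V, IsSimplexWithVertices c V s

/-- `t` is a facet (i.e. a `(c-1)`-dimensional face) of the `c`-simplex `s`. -/
def IsFacetOf {n : ℕ} (c : ℕ) (t s : Set (Fin n → ℝ)) : Prop :=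
  ∃ V W : Finset (Fin n → ℝ), IsSimplexWithVertices c V s ∧ W ⊆ V ∧ W.card = c ∧
    t = convexHull ℝ (W : Set (Fin n → ℝ))

/-- The boundary of a `c`-simplex: the union of its facets. -/
def simplexBoundary {n : ℕ} (c : ℕ) (s : Set (Fin n → ℝ)) : Set (Fin n → ℝ) :=
  ⋃₀ {t | IsFacetOf c t s}

/-- A finite set `P` of `c`-simplices in `ℝⁿ` is a (mod 2) cycle if every
`(c-1)`-simplex is a facet of an even number of members of `P`. -/
def IsCycle {n : ℕ} (c : ℕ) (P : Finset (Set (Fin n → ℝ))) : Prop :=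
  ∀ σ : Set (Fin n → ℝ), IsSimplex (c - 1) σ →
    Even {τ | τ ∈ P ∧ IsFacetOf c σ τ}.ncard

/-- `t` is a face of the simplex `s`: the convex hull of a nonempty subset of its vertices. -/
def IsFaceOfSimplex {n : ℕ} (t s : Set (Fin n → ℝ)) : Prop :=
  ∃ (c : ℕ) (V W : Finset (Fin n → ℝ)), IsSimplexWithVertices c V s ∧ W ⊆ V ∧ W.Nonempty ∧
    t = convexHull ℝ (W : Set (Fin n → ℝ))

/-- A finite set of simplices is simplicial if any two distinct members intersect,
whenever at all, in a common face. -/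
def IsSimplicial {n : ℕ} (Q : Finset (Set (Fin n → ℝ))) : Prop :=
  ∀ σ₁ ∈ Q, ∀ σ₂ ∈ Q, σ₁ ≠ σ₂ → (σ₁ ∩ σ₂).Nonempty →
    IsFaceOfSimplex (σ₁ ∩ σ₂) σ₁ ∧ IsFaceOfSimplex (σ₁ ∩ σ₂) σ₂

/-- `s` is a `c`-polytope in `ℝⁿ`: the convex hull of a finite set of points
whose affine span has dimension `c`. -/
def IsPolytope {n : ℕ} (c : ℕ) (s : Set (Fin n → ℝ)) : Prop :=
  ∃ V : Finset (Fin n → ℝ), V.Nonempty ∧ s = convexHull ℝ (V : Set (Fin n → ℝ)) ∧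
    Module.finrank ℝ (affineSpan ℝ (V : Set (Fin n → ℝ))).direction = c

/-- A set `V` of points of `ℝ^d` is in strong general position if for every finite
collection of pairwise disjoint subsets of `V`, the intersection of their affine spans
is either empty or has dimension at most `Σᵢ dim Aff(Vᵢ) - d(r-1)`. -/
def InStrongGeneralPosition {d : ℕ} (V : Set (Fin d → ℝ)) : Prop :=
  ∀ (r : ℕ) (Vs : Fin r → Set (Fin d → ℝ)), (∀ i, Vs i ⊆ V) →
    Pairwise (Function.onFun Disjoint Vs) →
    (⨅ i, affineSpan ℝ (Vs i)) = ⊥ ∨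
    (Module.finrank ℝ (⨅ i, affineSpan ℝ (Vs i)).direction : ℤ) ≤
      (∑ i, (Module.finrank ℝ (affineSpan ℝ (Vs i)).direction : ℤ)) - d * ((r : ℤ) - 1)

/-- `s` is a nondegenerate closed segment (1-simplex) in `ℝ^d`. -/
def IsSegment {d : ℕ} (s : Set (Fin d → ℝ)) : Prop :=
  ∃ a b : Fin d → ℝ, a ≠ b ∧ s = segment ℝ a b

/-- `p` is an endpoint of the nondegenerate segment `s`. -/
def IsEndpointOf {d : ℕ} (p : Fin d → ℝ) (s : Set (Fin d → ℝ)) : Prop :=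
  ∃ a b : Fin d → ℝ, a ≠ b ∧ s = segment ℝ a b ∧ (p = a ∨ p = b)

open Set
lemma mem_seg_param {E : Type*} [AddCommGroup E] [Module ℝ E] {x y p : E}
    (h : p ∈ segment ℝ x y) : ∃ θ : ℝ, 0 ≤ θ ∧ θ ≤ 1 ∧ p = x + θ • (y - x) := by
  rw [segment_eq_image'] at h
  obtain ⟨θ, ⟨h0, h1⟩, rfl⟩ := h
  exact ⟨θ, h0, h1, rfl⟩

lemma seg_param_mem {E : Type*} [AddCommGroup E] [Module ℝ E] (x y : E) {θ : ℝ}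
    (h0 : 0 ≤ θ) (h1 : θ ≤ 1) : x + θ • (y - x) ∈ segment ℝ x y := by
  rw [segment_eq_image']
  exact ⟨θ, ⟨h0, h1⟩, rfl⟩

lemma approach {d : ℕ} (z t O : Fin 2 → ℝ) {b : ℝ} (hb0 : 0 ≤ b) (hb1 : b < 1)
    (hO : O = z + b • (t - z))
    (Q : Finset (Set (Fin 2 → ℝ))) (hQseg : ∀ q ∈ Q, IsSegment q)
    (hsub : segment ℝ z t ⊆ ⋃₀ (Q : Set (Set (Fin 2 → ℝ)))) :
    ∃ q' ∈ Q, O ∈ q' ∧ ∃ s : ℝ, 0 < s ∧ O + s • (t - z) ∈ q' := by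
  set w := t - z with hw
  have hsnpos : ∀ n : ℕ, 0 < (1 - b) / (n + 1) := by
    intro n
    apply div_pos (by linarith) (by positivity)
  have hPn : ∀ n : ℕ, O + ((1 - b) / (n + 1)) • w ∈ segment ℝ z t := by
    intro n
    have h1 : (1 - b) / (n + 1) ≤ 1 - b := by
      rw [div_le_iff₀ (by positivity)]
      nlinarith [(hsnpos n).le]
    have : O + ((1 - b) / (n + 1)) • w = z + (b + (1 - b) / (n + 1)) • w := by
      rw [hO, add_smul]; abel
    rw [this]
    exact seg_param_mem z t (by have := hsnpos n; linarith) (by linarith)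
  have hPn' : ∀ n : ℕ, ∃ m ∈ Q, O + ((1 - b) / (n + 1)) • w ∈ m := by
    intro n
    obtain ⟨m, hm, hmem⟩ := hsub (hPn n)
    exact ⟨m, hm, hmem⟩
  choose F hF1 hF2 using hPn'
  have : Finite {m // m ∈ Q} := inferInstance
  obtain ⟨⟨q', hq'Q⟩, hfib⟩ := Finite.exists_infinite_fiber (fun n => (⟨F n, hF1 n⟩ : {m // m ∈ Q}))
  have hfib' : {n : ℕ | F n = q'}.Infinite := by
    have h := Set.infinite_coe_iff.mp hfib
    have he : ((fun n => (⟨F n, hF1 n⟩ : {m // m ∈ Q})) ⁻¹' {⟨q', hq'Q⟩}) = {n : ℕ | F n = q'} := by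
      ext n
      simp [Subtype.ext_iff]
    rwa [he] at h
  -- q' is closed
  have hclosed : IsClosed q' := by
    obtain ⟨a', b', _, rfl⟩ := hQseg q' hq'Q
    rw [← convexHull_pair]
    exact (Set.toFinite ({a', b'} : Set (Fin 2 → ℝ))).isClosed_convexHull (𝕜 := ℝ)
  have hOq' : O ∈ q' := by
    rw [← hclosed.closure_eq]
    rw [Metric.mem_closure_iff]
    intro ε hε
    obtain ⟨N, hN⟩ := exists_nat_gt ((1 - b) * ‖w‖ / ε)
    obtain ⟨n, hnS, hn⟩ := hfib'.exists_gt N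
    refine ⟨O + ((1 - b) / (n + 1)) • w, ?_, ?_⟩
    · have := hF2 n; rwa [hnS] at this
    · rw [dist_eq_norm]
      have : O - (O + ((1 - b) / (n + 1)) • w) = (-((1 - b) / (n + 1))) • w := by
        rw [neg_smul]; abel
      rw [this, norm_smul]
      simp only [norm_neg, Real.norm_eq_abs, abs_of_pos (hsnpos n)]
      rw [div_mul_eq_mul_div, div_lt_iff₀ (by positivity)]
      have hNn : (N : ℝ) + 1 ≤ (n : ℝ) + 1 := by
        have : (N : ℝ) ≤ n := by exact_mod_cast hn.le
        linarith
      have h1 : (1 - b) * ‖w‖ < ε * ((N : ℝ) + 1) := by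
        rw [div_lt_iff₀ hε] at hN
        calc (1 - b) * ‖w‖ < ε * N := by linarith
        _ ≤ ε * ((N:ℝ) + 1) := by nlinarith
      calc (1 - b) * ‖w‖ < ε * ((N : ℝ) + 1) := h1
      _ ≤ ε * ((n : ℝ) + 1) := by nlinarith
  obtain ⟨n, hnS⟩ := hfib'.nonempty
  refine ⟨q', hq'Q, hOq', (1 - b) / (n + 1), hsnpos n, ?_⟩
  have := hF2 n
  rwa [Set.mem_setOf_eq.mp hnS] at this

lemma indep (x y z t O : Fin 2 → ℝ) (hO : segment ℝ x y ∩ segment ℝ z t = {O})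
    {a b : ℝ} (ha0 : 0 < a) (ha1 : a < 1) (hb0 : 0 < b) (hb1 : b < 1)
    (hOa : O = x + a • (y - x)) (hOb : O = z + b • (t - z)) (hxy : x ≠ y) (hzt : z ≠ t) :
    (y - x) 0 * (t - z) 1 - (y - x) 1 * (t - z) 0 ≠ 0 := by
  intro hD0
  set u := y - x with hu
  set w := t - z with hw
  have hune : u ≠ 0 := sub_ne_zero.mpr (Ne.symm hxy)
  -- find c ≠ 0 with u = c • scaled w
  have hkey : ∃ c : ℝ, c ≠ 0 ∧ ∀ i, u i = c * w i := by
    by_cases hw0 : w 0 ≠ 0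
    · refine ⟨u 0 / w 0, ?_, ?_⟩
      · intro hc0
        apply hune
        have h0 : u 0 = 0 := by
          field_simp at hc0; simpa using hc0
        have h1 : u 1 = 0 := by
          have : u 0 * w 1 = u 1 * w 0 := by linarith
          rw [h0] at this
          rw [zero_mul] at this
          rcases mul_eq_zero.mp this.symm with h | h
          · exact h
          · exact absurd h hw0
        funext i
        fin_cases i <;> simp [h0, h1]
      · intro i
        fin_cases i
        · exact (div_mul_cancel₀ _ hw0).symm
        · show u 1 = u 0 / w 0 * w 1
          rw [div_mul_eq_mul_div, eq_div_iff hw0]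
          linarith
    · push_neg at hw0
      by_cases hw1 : w 1 ≠ 0
      · refine ⟨u 1 / w 1, ?_, ?_⟩
        · intro hc0
          apply hune
          have h1 : u 1 = 0 := by field_simp at hc0; simpa using hc0
          have h0 : u 0 = 0 := by
            have : u 0 * w 1 = u 1 * w 0 := by linarith
            rw [h1, hw0] at this
            simp at this
            rcases this with h | h
            · exact h
            · exact absurd h hw1
          funext i; fin_cases i <;> simp [h0, h1]
        · intro i
          fin_cases i
          · show u 0 = u 1 / w 1 * w 0
            rw [div_mul_eq_mul_div, eq_div_iff hw1]; linarith
          · exact (div_mul_cancel₀ _ hw1).symm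
      · push_neg at hw1
        exfalso
        apply hzt
        have hwz : w = 0 := by funext i; fin_cases i <;> assumption
        have : t - z = 0 := hwz
        have := sub_eq_zero.mp this
        exact this.symm
  obtain ⟨c, hc0, hc⟩ := hkey
  set ε := min (1 - a) (min b (1 - b) / |c|) with hε
  have hεpos : 0 < ε := by
    apply lt_min (by linarith)
    apply div_pos (lt_min hb0 (by linarith)) (abs_pos.mpr hc0)
  set P := O + ε • u with hP
  have hε1 : ε ≤ 1 - a := min_le_left _ _
  have hε2 : ε * |c| ≤ min b (1 - b) := by
    have h := min_le_right (1 - a) (min b (1 - b) / |c|)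
    rw [← hε] at h
    calc ε * |c| ≤ (min b (1 - b) / |c|) * |c| := by
          apply mul_le_mul_of_nonneg_right h (abs_nonneg c)
    _ = min b (1 - b) := div_mul_cancel₀ _ (abs_ne_zero.mpr hc0)
  have hεc : |ε * c| ≤ min b (1 - b) := by
    rw [abs_mul, abs_of_pos hεpos]; exact hε2
  have hεcb := abs_le.mp hεc
  have hmb1 : min b (1 - b) ≤ b := min_le_left _ _
  have hmb2 : min b (1 - b) ≤ 1 - b := min_le_right _ _
  have hPxy : P ∈ segment ℝ x y := by
    have hPe : P = x + (a + ε) • u := by rw [hP, hOa, add_smul]; abel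
    rw [hPe]
    exact seg_param_mem x y (by linarith) (by linarith)
  have hPzt : P ∈ segment ℝ z t := by
    have hεu : ε • u = (ε * c) • w := by
      funext i
      simp only [Pi.smul_apply, smul_eq_mul, hc i]
      ring
    have hPe : P = z + (b + ε * c) • w := by
      rw [hP, hOb, hεu, add_smul]; abel
    rw [hPe]
    exact seg_param_mem z t (by linarith [hεcb.1]) (by linarith [hεcb.2])
  have hPO : P = O := by
    have : P ∈ segment ℝ x y ∩ segment ℝ z t := ⟨hPxy, hPzt⟩
    rw [hO] at this
    exact this
  rw [hP, add_eq_left] at hPO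
  rcases smul_eq_zero.mp hPO with h | h
  · exact hεpos.ne' h
  · exact hune h

/-- The claim in the Remark after Conjecture 3.3: if two segments in `ℝ²` cross at a
single interior point `O`, then any simplicial 1-chain whose union is the union of the
two segments must have `O` as a vertex (an endpoint of one of its segments). -/
theorem stmt6 (x y z t O : Fin 2 → ℝ)
    (hO : segment ℝ x y ∩ segment ℝ z t = {O})
    (hOx : O ≠ x) (hOy : O ≠ y) (hOz : O ≠ z) (hOt : O ≠ t)
    (Q : Finset (Set (Fin 2 → ℝ)))
    (hQseg : ∀ q ∈ Q, IsSegment q)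
    (hQint : ∀ q₁ ∈ Q, ∀ q₂ ∈ Q, q₁ ≠ q₂ →
      q₁ ∩ q₂ = ∅ ∨ ∃ p, q₁ ∩ q₂ = {p} ∧ IsEndpointOf p q₁ ∧ IsEndpointOf p q₂)
    (hQun : ⋃₀ (Q : Set (Set (Fin 2 → ℝ))) = segment ℝ x y ∪ segment ℝ z t) :
    ∃ q ∈ Q, IsEndpointOf O q := by
  have hOmem : O ∈ segment ℝ x y ∩ segment ℝ z t := by rw [hO]; rfl
  obtain ⟨hOxy, hOzt⟩ := hOmem
  have hxy : x ≠ y := by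
    intro h; subst h; rw [segment_same] at hOxy; exact hOx hOxy
  have hzt : z ≠ t := by
    intro h; subst h; rw [segment_same] at hOzt; exact hOz hOzt
  obtain ⟨a, ha0', ha1', hOa⟩ := mem_seg_param hOxy
  obtain ⟨b, hb0', hb1', hOb⟩ := mem_seg_param hOzt
  have ha0 : 0 < a := by
    rcases lt_or_eq_of_le ha0' with h | h
    · exact h
    · exfalso; apply hOx; rw [hOa, ← h]; simp
  have ha1 : a < 1 := by
    rcases lt_or_eq_of_le ha1' with h | h
    · exact h
    · exfalso; apply hOy; rw [hOa, h]; simp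
  have hb0 : 0 < b := by
    rcases lt_or_eq_of_le hb0' with h | h
    · exact h
    · exfalso; apply hOz; rw [hOb, ← h]; simp
  have hb1 : b < 1 := by
    rcases lt_or_eq_of_le hb1' with h | h
    · exact h
    · exfalso; apply hOt; rw [hOb, h]; simp
  have hD := indep x y z t O hO ha0 ha1 hb0 hb1 hOa hOb hxy hzt
  by_contra hcon
  push_neg at hcon
  have hOun : O ∈ ⋃₀ (Q : Set (Set (Fin 2 → ℝ))) := by
    rw [hQun]; exact Or.inl hOxy
  obtain ⟨q, hqQ, hOq⟩ := hOun
  have uniq : ∀ q' ∈ Q, O ∈ q' → q' = q := by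
    intro q' hq'Q hOq'
    by_contra hne
    rcases hQint q' hq'Q q hqQ hne with h0 | ⟨p, hp, _, hep2⟩
    · have : O ∈ q' ∩ q := ⟨hOq', hOq⟩
      rw [h0] at this; exact this
    · have hOp : O = p := by
        have : O ∈ q' ∩ q := ⟨hOq', hOq⟩
        rwa [hp] at this
      exact hcon q hqQ (hOp ▸ hep2)
  obtain ⟨q1, hq1Q, hOq1, s, hs, hsw⟩ := approach (d := 2) z t O hb0.le hb1 hOb Q hQseg
    (by rw [hQun]; exact subset_union_right)
  obtain ⟨q2, hq2Q, hOq2, s', hs', hsu⟩ := approach (d := 2) x y O ha0.le ha1 hOa Q hQseg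
    (by rw [hQun]; exact subset_union_left)
  rw [uniq q1 hq1Q hOq1] at hsw
  rw [uniq q2 hq2Q hOq2] at hsu
  obtain ⟨a', b', _, hqe⟩ := hQseg q hqQ
  have hconv : Convex ℝ q := hqe ▸ convex_segment a' b'
  have hM : (1/2 : ℝ) • (O + s • (t - z)) + (1/2 : ℝ) • (O + s' • (y - x)) ∈ q :=
    hconv hsw hsu (by norm_num) (by norm_num) (by norm_num)
  have hMun : (1/2 : ℝ) • (O + s • (t - z)) + (1/2 : ℝ) • (O + s' • (y - x)) ∈
      segment ℝ x y ∪ segment ℝ z t := by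
    rw [← hQun]; exact ⟨q, hqQ, hM⟩
  apply hD
  rcases hMun with hMc | hMc
  · obtain ⟨θ, _, _, hMe⟩ := mem_seg_param hMc
    have h0 := congrFun hMe 0
    have h1 := congrFun hMe 1
    have hO0 := congrFun hOa 0
    have hO1 := congrFun hOa 1
    simp only [Pi.add_apply, Pi.smul_apply, Pi.sub_apply, smul_eq_mul] at h0 h1 hO0 hO1
    simp only [Pi.sub_apply]
    have hkey : s * ((y 0 - x 0) * (t 1 - z 1) - (y 1 - x 1) * (t 0 - z 0)) = 0 := by
      linear_combination 2 * (y 0 - x 0) * h1 - 2 * (y 0 - x 0) * hO1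
        - 2 * (y 1 - x 1) * h0 + 2 * (y 1 - x 1) * hO0
    rcases mul_eq_zero.mp hkey with h | h
    · exact absurd h hs.ne'
    · exact h
  · obtain ⟨θ, _, _, hMe⟩ := mem_seg_param hMc
    have h0 := congrFun hMe 0
    have h1 := congrFun hMe 1
    have hO0 := congrFun hOb 0
    have hO1 := congrFun hOb 1
    simp only [Pi.add_apply, Pi.smul_apply, Pi.sub_apply, smul_eq_mul] at h0 h1 hO0 hO1
    simp only [Pi.sub_apply]
    have hkey : s' * ((y 0 - x 0) * (t 1 - z 1) - (y 1 - x 1) * (t 0 - z 0)) = 0 := by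
      linear_combination 2 * (t 1 - z 1) * h0 - 2 * (t 1 - z 1) * hO0
        - 2 * (t 0 - z 0) * h1 + 2 * (t 0 - z 0) * hO1
    rcases mul_eq_zero.mp hkey with h | h
    · exact absurd h hs'.ne'
    · exact h
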